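/- For 0 < α < θ < 1 there exists C = C(n) such that every C^{1,θ} function f : ℝⁿ → ℝ satisfies ‖∇f‖_{C^{0,α}(ℝⁿ)} ≤ C ‖f‖_{C^{0,θ}(ℝⁿ)}^{θ-α} ‖∇f‖_{C^{0,θ}(ℝⁿ)}^{1+α-θ}. -/

import Mathlib

open Real

/-- Landau-type bound: the gradient sup is controlled by the Hölder seminorms of `f` and `∇f`. -/
lemma landau_bound {E : Type*} [NormedAddCommGroup E] [NormedSpace ℝ E]
    (f : E → ℝ) (hf : Differentiable ℝ f)
    {θ Kf Kg ρ : ℝ} (hθ : 0 < θ) (hρ : 0 < ρ) (hKf0 : 0 ≤ Kf) (hKg0 : 0 ≤ Kg)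
    (hKf : ∀ x y, |f x - f y| ≤ Kf * ‖x - y‖ ^ θ)
    (hKg : ∀ x y, ‖fderiv ℝ f x - fderiv ℝ f y‖ ≤ Kg * ‖x - y‖ ^ θ)
    (x : E) :
    ‖fderiv ℝ f x‖ ≤ Kf * ρ ^ (θ - 1) + Kg * ρ ^ θ := by
  have hb : 0 ≤ Kf * ρ ^ (θ - 1) + Kg * ρ ^ θ := by positivity
  refine ContinuousLinearMap.opNorm_le_bound _ hb (fun v => ?_)
  rcases eq_or_ne v 0 with rfl | hv
  · simp
  have hvn : (0:ℝ) < ‖v‖ := norm_pos_iff.mpr hv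
  set y := x + (ρ / ‖v‖) • v with hy
  have hyx : y - x = (ρ / ‖v‖) • v := by simp [hy]
  have hdist : ‖y - x‖ = ρ := by
    rw [hyx, norm_smul, Real.norm_eq_abs, abs_div, abs_of_pos hρ, abs_of_pos hvn]
    field_simp
  have key : ‖(f y - fderiv ℝ f x y) - (f x - fderiv ℝ f x x)‖
      ≤ (Kg * ρ ^ θ) * ‖y - x‖ := by
    refine (convex_closedBall x ρ).norm_image_sub_le_of_norm_fderiv_le
      (f := fun z => f z - fderiv ℝ f x z)
      (fun z _ => ((hf z).sub ((fderiv ℝ f x).differentiableAt))) ?_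
      (Metric.mem_closedBall_self hρ.le) ?_
    · intro z hz
      have hz' : ‖z - x‖ ≤ ρ := by
        rw [← dist_eq_norm]; exact Metric.mem_closedBall.mp hz
      have hder : fderiv ℝ (fun z => f z - fderiv ℝ f x z) z
          = fderiv ℝ f z - fderiv ℝ f x := by
        rw [fderiv_fun_sub (hf z) ((fderiv ℝ f x).differentiableAt),
          ContinuousLinearMap.fderiv]
      rw [hder]
      calc ‖fderiv ℝ f z - fderiv ℝ f x‖ ≤ Kg * ‖z - x‖ ^ θ := hKg z x
        _ ≤ Kg * ρ ^ θ := by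
            have := Real.rpow_le_rpow (norm_nonneg (z-x)) hz' hθ.le
            exact mul_le_mul_of_nonneg_left this hKg0
    · rw [Metric.mem_closedBall, dist_eq_norm, hdist]
  have key' : ‖(f y - f x) - fderiv ℝ f x (y - x)‖ ≤ Kg * ρ ^ θ * ρ := by
    have h2 : (f y - f x) - fderiv ℝ f x (y - x)
        = (f y - fderiv ℝ f x y) - (f x - fderiv ℝ f x x) := by
      rw [map_sub]; ring
    rw [h2]
    calc ‖(f y - fderiv ℝ f x y) - (f x - fderiv ℝ f x x)‖
        ≤ Kg * ρ ^ θ * ‖y - x‖ := key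
      _ = Kg * ρ ^ θ * ρ := by rw [hdist]
  have hLyx : ‖fderiv ℝ f x (y - x)‖ ≤ Kf * ρ ^ θ + Kg * ρ ^ θ * ρ := by
    calc ‖fderiv ℝ f x (y - x)‖
        = ‖(f y - f x) - ((f y - f x) - fderiv ℝ f x (y - x))‖ := by ring_nf
      _ ≤ ‖f y - f x‖ + ‖(f y - f x) - fderiv ℝ f x (y - x)‖ := norm_sub_le _ _
      _ ≤ Kf * ρ ^ θ + Kg * ρ ^ θ * ρ := by
          refine add_le_add ?_ key'
          have h := hKf y x
          rw [hdist] at h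
          rw [Real.norm_eq_abs]
          exact h
  have hsc : ‖fderiv ℝ f x (y - x)‖ = (ρ / ‖v‖) * ‖fderiv ℝ f x v‖ := by
    rw [hyx, map_smul, norm_smul, Real.norm_eq_abs, abs_of_pos (div_pos hρ hvn)]
  rw [hsc] at hLyx
  rw [Real.rpow_sub hρ, Real.rpow_one]
  rw [← mul_le_mul_iff_of_pos_right hρ]
  have heq : (Kf * (ρ ^ θ / ρ) + Kg * ρ ^ θ) * ‖v‖ * ρ
      = (Kf * ρ ^ θ + Kg * ρ ^ θ * ρ) * ‖v‖ := by
    field_simp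
  rw [heq]
  rw [div_mul_eq_mul_div, div_le_iff₀ hvn] at hLyx
  linarith

/-- The α-Hölder seminorm bound obtained by splitting at scale `ρ`. -/
lemma seminorm_bound {E : Type*} [NormedAddCommGroup E] [NormedSpace ℝ E]
    (f : E → ℝ) {θ α ρ S Kg : ℝ} (hα : 0 < α) (hαθ : α < θ) (hρ : 0 < ρ)
    (hS : ∀ x, ‖fderiv ℝ f x‖ ≤ S) (hKg0 : 0 ≤ Kg)
    (hKg : ∀ x y, ‖fderiv ℝ f x - fderiv ℝ f y‖ ≤ Kg * ‖x - y‖ ^ θ)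
    (x y : E) :
    ‖fderiv ℝ f x - fderiv ℝ f y‖ ≤ (Kg * ρ ^ (θ - α) + 2 * S * ρ ^ (-α)) * ‖x - y‖ ^ α := by
  have hS0 : 0 ≤ S := le_trans (norm_nonneg _) (hS x)
  rcases eq_or_lt_of_le (norm_nonneg (x - y)) with hd0 | hd
  · -- x = y
    have : x = y := by
      have := norm_eq_zero.mp hd0.symm
      exact sub_eq_zero.mp this
    subst this
    simp [Real.zero_rpow hα.ne']
  rcases le_or_gt ‖x - y‖ ρ with hle | hlt
  · -- near case
    calc ‖fderiv ℝ f x - fderiv ℝ f y‖ ≤ Kg * ‖x - y‖ ^ θ := hKg x y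
      _ = Kg * (‖x - y‖ ^ (θ - α) * ‖x - y‖ ^ α) := by
          rw [← Real.rpow_add hd]; ring_nf
      _ ≤ Kg * (ρ ^ (θ - α) * ‖x - y‖ ^ α) := by
          have h := Real.rpow_le_rpow hd.le hle (by linarith : (0:ℝ) ≤ θ - α)
          have h2 : (0:ℝ) ≤ ‖x - y‖ ^ α := Real.rpow_nonneg (norm_nonneg _) _
          exact mul_le_mul_of_nonneg_left (mul_le_mul_of_nonneg_right h h2) hKg0
      _ ≤ (Kg * ρ ^ (θ - α) + 2 * S * ρ ^ (-α)) * ‖x - y‖ ^ α := by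
          have h1 : (0:ℝ) ≤ 2 * S * ρ ^ (-α) := by positivity
          have h2 : (0:ℝ) ≤ ‖x - y‖ ^ α := Real.rpow_nonneg (norm_nonneg _) _
          nlinarith
  · -- far case
    have h1 : (1:ℝ) ≤ ρ ^ (-α) * ‖x - y‖ ^ α := by
      rw [Real.rpow_neg hρ.le]
      rw [inv_mul_eq_div, le_div_iff₀ (Real.rpow_pos_of_pos hρ _), one_mul]
      exact Real.rpow_le_rpow hρ.le hlt.le hα.le
    calc ‖fderiv ℝ f x - fderiv ℝ f y‖
        ≤ ‖fderiv ℝ f x‖ + ‖fderiv ℝ f y‖ := norm_sub_le _ _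
      _ ≤ 2 * S := by have := hS x; have := hS y; linarith
      _ ≤ 2 * S * (ρ ^ (-α) * ‖x - y‖ ^ α) := by
          nlinarith
      _ ≤ (Kg * ρ ^ (θ - α) + 2 * S * ρ ^ (-α)) * ‖x - y‖ ^ α := by
          have h2 : (0:ℝ) ≤ Kg * ρ ^ (θ - α) := by positivity
          have h3 : (0:ℝ) ≤ ‖x - y‖ ^ α := Real.rpow_nonneg (norm_nonneg _) _
          nlinarith

/-- Full Hölder-norm interpolation: for `0 < α < θ < 1` there is `C = C(n)` such that every
differentiable `f : ℝⁿ → ℝ` with `‖f‖_{C^{0,θ}} ≤ Mf + Kf` and `‖∇f‖_{C^{0,θ}} ≤ Mg + Kg`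
(sup-norm bounds `Mf, Mg`; θ-Hölder seminorm bounds `Kf, Kg`) satisfies
`‖∇f‖_{C^{0,α}} ≤ C ‖f‖_{C^{0,θ}}^{θ-α} ‖∇f‖_{C^{0,θ}}^{1+α-θ}`, expressed by exhibiting a
sup-norm part `S` and an α-seminorm part `T` of `∇f` with `S + T` bounded accordingly. -/
theorem holder_interpolation_full
    (n : ℕ) (α θ : ℝ) (hα : 0 < α) (hαθ : α < θ) (hθ : θ < 1) :
    ∃ C > (0 : ℝ), ∀ f : EuclideanSpace ℝ (Fin n) → ℝ, Differentiable ℝ f →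
      ∀ Mf Kf Mg Kg : ℝ,
        (∀ x, |f x| ≤ Mf) →
        (∀ x y, |f x - f y| ≤ Kf * ‖x - y‖ ^ θ) →
        (∀ x, ‖fderiv ℝ f x‖ ≤ Mg) →
        (∀ x y, ‖fderiv ℝ f x - fderiv ℝ f y‖ ≤ Kg * ‖x - y‖ ^ θ) →
        ∃ S T : ℝ,
          (∀ x, ‖fderiv ℝ f x‖ ≤ S) ∧
          (∀ x y, ‖fderiv ℝ f x - fderiv ℝ f y‖ ≤ T * ‖x - y‖ ^ α) ∧
          S + T ≤ C * (Mf + Kf) ^ (θ - α) * (Mg + Kg) ^ (1 + α - θ) := by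
  refine ⟨7, by norm_num, ?_⟩
  intro f hf Mf Kf Mg Kg hMf hKf hMg hKg
  rcases Nat.eq_zero_or_pos n with rfl | hn
  · -- zero-dimensional case : every two points are equal
    refine ⟨Mg, 7 * (Mf + Kf) ^ (θ - α) * (Mg + Kg) ^ (1 + α - θ) - Mg, hMg, ?_, by linarith⟩
    intro x y
    have hxy : x = y := PiLp.ext fun i => Fin.elim0 i
    subst hxy
    simp [Real.zero_rpow hα.ne']
  -- now n ≥ 1
  have hMf0 : 0 ≤ Mf := le_trans (abs_nonneg _) (hMf 0)
  have hMg0 : 0 ≤ Mg := le_trans (norm_nonneg _) (hMg 0)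
  have he : ‖(EuclideanSpace.single (⟨0, hn⟩ : Fin n) (1:ℝ)) - 0‖ = 1 := by
    rw [sub_zero, EuclideanSpace.norm_single]; norm_num
  have hKf0 : 0 ≤ Kf := by
    have h := hKf (EuclideanSpace.single (⟨0, hn⟩ : Fin n) (1:ℝ)) 0
    rw [he, Real.one_rpow, mul_one] at h
    exact le_trans (abs_nonneg _) h
  have hKg0 : 0 ≤ Kg := by
    have h := hKg (EuclideanSpace.single (⟨0, hn⟩ : Fin n) (1:ℝ)) 0
    rw [he, Real.one_rpow, mul_one] at h
    exact le_trans (norm_nonneg _) h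
  set A := Mf + Kf with hA
  set B := Mg + Kg with hB
  have hA0 : 0 ≤ A := by positivity
  have hB0 : 0 ≤ B := by positivity
  rcases eq_or_lt_of_le hB0 with hBz | hBpos
  · -- B = 0 : gradient vanishes
    have hMg' : Mg = 0 := by linarith [hKg0]
    refine ⟨0, 0, fun x => by simpa [hMg'] using hMg x, ?_, ?_⟩
    · intro x y
      rw [zero_mul]
      have h1 := hMg x; have h2 := hMg y
      calc ‖fderiv ℝ f x - fderiv ℝ f y‖ ≤ ‖fderiv ℝ f x‖ + ‖fderiv ℝ f y‖ := norm_sub_le _ _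
        _ ≤ 0 := by rw [hMg'] at h1 h2; linarith
    · rw [← hBz, Real.zero_rpow (by linarith : (1:ℝ) + α - θ ≠ 0), mul_zero]
      norm_num
  rcases eq_or_lt_of_le hA0 with hAz | hApos
  · -- A = 0 : f vanishes identically
    have hMf' : Mf = 0 := by linarith [hKf0]
    have hf0 : f = fun _ => (0:ℝ) := by
      funext x
      have := hMf x
      rw [hMf'] at this
      exact abs_nonpos_iff.mp this
    have hd0 : ∀ x, fderiv ℝ f x = 0 := by
      intro x; rw [hf0]; exact fderiv_const_apply 0
    refine ⟨0, 0, fun x => by simp [hd0], ?_, ?_⟩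
    · intro x y; rw [zero_mul, hd0, hd0, sub_zero, norm_zero]
    · rw [← hAz, Real.zero_rpow (by linarith : θ - α ≠ 0), mul_zero, zero_mul]
      norm_num
  -- main case : A > 0, B > 0
  set ρ := A / B with hρdef
  have hρ : 0 < ρ := div_pos hApos hBpos
  have hAB : A = B * ρ := by rw [hρdef]; field_simp
  have hBID : B * ρ ^ (θ - α) = A ^ (θ - α) * B ^ (1 + α - θ) := by
    have h1 : ρ ^ (θ - α) = A ^ (θ - α) * B ^ (-(θ - α)) := by
      rw [hρdef, Real.div_rpow hApos.le hBpos.le, Real.rpow_neg hBpos.le, div_eq_mul_inv]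
    have h2 : B ^ ((1:ℝ) + α - θ) = B ^ (1:ℝ) * B ^ (-(θ - α)) := by
      rw [← Real.rpow_add hBpos]; congr 1; ring
    rw [h1, h2, Real.rpow_one]; ring
  have hθ0 : 0 < θ := lt_trans hα hαθ
  -- Landau bound at scale ρ
  have hLan : ∀ x, ‖fderiv ℝ f x‖ ≤ Kf * ρ ^ (θ - 1) + Kg * ρ ^ θ :=
    landau_bound f hf hθ0 hρ hKf0 hKg0 hKf hKg
  have hLan2 : Kf * ρ ^ (θ - 1) + Kg * ρ ^ θ ≤ 2 * (B * ρ ^ θ) := by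
    have h1 : Kf * ρ ^ (θ - 1) ≤ B * ρ ^ θ := by
      have hKfA : Kf ≤ A := by linarith
      calc Kf * ρ ^ (θ - 1) ≤ A * ρ ^ (θ - 1) := by
            exact mul_le_mul_of_nonneg_right hKfA (Real.rpow_nonneg hρ.le _)
        _ = B * ρ ^ θ := by
            have hmul : ρ * ρ ^ (θ - 1) = ρ ^ θ := by
              have h := Real.rpow_add hρ 1 (θ - 1)
              rw [Real.rpow_one] at h
              rw [← h]; congr 1; ring
            rw [hAB, mul_assoc, hmul]
    have h2 : Kg * ρ ^ θ ≤ B * ρ ^ θ := by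
      have : Kg ≤ B := by linarith
      exact mul_le_mul_of_nonneg_right this (Real.rpow_nonneg hρ.le _)
    linarith
  rcases le_or_gt ρ 1 with hρ1 | hρ1
  · -- small ρ : use the Landau sup bound
    set S := 2 * (B * ρ ^ θ) with hS
    have hSsup : ∀ x, ‖fderiv ℝ f x‖ ≤ S := fun x => le_trans (hLan x) hLan2
    refine ⟨S, Kg * ρ ^ (θ - α) + 2 * S * ρ ^ (-α), hSsup,
      seminorm_bound f hα hαθ hρ hSsup hKg0 hKg, ?_⟩
    have hkey : ρ ^ θ ≤ ρ ^ (θ - α) := Real.rpow_le_rpow_of_exponent_ge hρ hρ1 (by linarith)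
    have hS1 : S ≤ 2 * (B * ρ ^ (θ - α)) := by
      have := mul_le_mul_of_nonneg_left hkey hBpos.le
      simp only [hS]; linarith
    have hT1 : Kg * ρ ^ (θ - α) ≤ B * ρ ^ (θ - α) :=
      mul_le_mul_of_nonneg_right (by linarith) (Real.rpow_nonneg hρ.le _)
    have hT2 : 2 * S * ρ ^ (-α) ≤ 4 * (B * ρ ^ (θ - α)) := by
      have hρθ : ρ ^ θ * ρ ^ (-α) = ρ ^ (θ - α) := by
        rw [← Real.rpow_add hρ]; ring_nf
      have : 2 * S * ρ ^ (-α) = 4 * (B * (ρ ^ θ * ρ ^ (-α))) := by rw [hS]; ring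
      rw [this, hρθ]
    calc S + (Kg * ρ ^ (θ - α) + 2 * S * ρ ^ (-α)) ≤ 7 * (B * ρ ^ (θ - α)) := by linarith
      _ = 7 * (A ^ (θ - α) * B ^ (1 + α - θ)) := by rw [hBID]
      _ = 7 * A ^ (θ - α) * B ^ (1 + α - θ) := by ring
  · -- large ρ : use the trivial sup bound Mg
    refine ⟨Mg, Kg * ρ ^ (θ - α) + 2 * Mg * ρ ^ (-α), hMg,
      seminorm_bound f hα hαθ hρ hMg hKg0 hKg, ?_⟩
    have hone : (1:ℝ) ≤ ρ ^ (θ - α) := Real.one_le_rpow hρ1.le (by linarith)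
    have hinv : ρ ^ (-α) ≤ 1 := by
      rw [Real.rpow_neg hρ.le]
      have h1 : (1:ℝ) ≤ ρ ^ α := Real.one_le_rpow hρ1.le hα.le
      exact inv_le_one_of_one_le₀ h1
    have hS1 : Mg ≤ B * ρ ^ (θ - α) := by
      have : Mg ≤ B := by linarith
      nlinarith
    have hT1 : Kg * ρ ^ (θ - α) ≤ B * ρ ^ (θ - α) :=
      mul_le_mul_of_nonneg_right (by linarith) (Real.rpow_nonneg hρ.le _)
    have hT2 : 2 * Mg * ρ ^ (-α) ≤ 2 * (B * ρ ^ (θ - α)) := by nlinarith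
    calc Mg + (Kg * ρ ^ (θ - α) + 2 * Mg * ρ ^ (-α)) ≤ 7 * (B * ρ ^ (θ - α)) := by
          have hB1 : 0 ≤ B * ρ ^ (θ - α) := by positivity
          linarith
      _ = 7 * (A ^ (θ - α) * B ^ (1 + α - θ)) := by rw [hBID]
      _ = 7 * A ^ (θ - α) * B ^ (1 + α - θ) := by ring
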